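/- arXiv:2402.00605 — 7 statements merged into one kernel-verified Lean document; each statement's English description precedes it below -/
import Mathlib

section
/- On a symplectic Lie algebra (g, ω), the bilinear product ∇ defined implicitly by ω(∇_x y, z) = -ω(y, [x,z]) for all x,y,z is a flat torsion-free connection: it satisfies ∇_x y - ∇_y x = [x,y] for all x,y, and ∇_x∇_y z - ∇_y∇_x z - ∇_{[x,y]} z = 0 for all x,y,z. -/
/-- On a symplectic Lie algebra, the product `∇` defined by
`ω(∇_x y, z) = -ω(y, [x,z])` is a flat torsion-free connection. -/
theorem symplectic_connection_flat_torsion_free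
    (L : Type*) [LieRing L] [LieAlgebra ℝ L] [FiniteDimensional ℝ L]
    (ω : L →ₗ[ℝ] L →ₗ[ℝ] ℝ)
    (halt : ∀ x : L, ω x x = 0)
    (hnd : ∀ x : L, (∀ y : L, ω x y = 0) → x = 0)
    (hclosed : ∀ x y z : L, ω ⁅x, y⁆ z + ω ⁅y, z⁆ x + ω ⁅z, x⁆ y = 0)
    (D : L →ₗ[ℝ] L →ₗ[ℝ] L)
    (hD : ∀ x y z : L, ω (D x y) z = -(ω y ⁅x, z⁆)) :
    (∀ x y : L, D x y - D y x = ⁅x, y⁆) ∧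
    (∀ x y z : L, D x (D y z) - D y (D x z) - D ⁅x, y⁆ z = 0) := by
  have skew : ∀ x y : L, ω x y = -ω y x := by
    intro x y
    have h := halt (x + y)
    simp only [map_add, LinearMap.add_apply, halt] at h
    linarith
  constructor
  · intro x y
    have key : D x y - D y x - ⁅x, y⁆ = 0 := by
      apply hnd
      intro w
      have hc := hclosed x y w
      have h1 : ω ⁅x, w⁆ y = -ω ⁅w, x⁆ y := by
        have h := lie_skew w x
        calc (ω ⁅x, w⁆) y = (ω (-⁅w, x⁆)) y := by rw [← h, neg_neg]
        _ = -(ω ⁅w, x⁆) y := by rw [map_neg]; rfl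
      have h2 := skew y ⁅x, w⁆
      have h3 := skew x ⁅y, w⁆
      have e1 := hD x y w
      have e2 := hD y x w
      simp only [map_sub, LinearMap.sub_apply]
      linarith
    exact sub_eq_zero.mp key
  · intro x y z
    have key : D x (D y z) - D y (D x z) - D ⁅x, y⁆ z = 0 := by
      apply hnd
      intro w
      have e1 : ω (D x (D y z)) w = ω z ⁅y, ⁅x, w⁆⁆ := by
        rw [hD, hD]; ring
      have e2 : ω (D y (D x z)) w = ω z ⁅x, ⁅y, w⁆⁆ := by
        rw [hD, hD]; ring
      have e3 : ω (D ⁅x, y⁆ z) w = -(ω z ⁅⁅x, y⁆, w⁆) := hD _ _ _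
      have e4 : ω z ⁅⁅x, y⁆, w⁆ = ω z ⁅x, ⁅y, w⁆⁆ - ω z ⁅y, ⁅x, w⁆⁆ := by
        rw [lie_lie, map_sub]
      simp only [map_sub, LinearMap.sub_apply]
      linarith
    exact key
end

section
/- Let (g, ω) be a symplectic Lie algebra with a Lagrangian ideal j, and h = g/j. The formula ω_h(∇̄_{x̄} ȳ, u) = -ω(y, [x,u]) for u ∈ j (using the isomorphism ω_h : h → j*) defines a well-defined bilinear operation ∇̄ on h that is a flat torsion-free connection on the quotient Lie algebra h. -/
set_option maxHeartbeats 1000000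


/-- For a Lagrangian ideal `j` of a symplectic Lie algebra `(L, ω)`, the formula
`ω_h(∇̄_{x̄} ȳ, u) = -ω(y, [x,u])` (for `u ∈ j`) defines a well-defined bilinear
operation on the quotient `L ⧸ j` which is a flat torsion-free connection. -/
theorem quotient_flat_torsion_free_connection
    (L : Type*) [LieRing L] [LieAlgebra ℝ L] [FiniteDimensional ℝ L]
    (ω : L →ₗ[ℝ] L →ₗ[ℝ] ℝ)
    (halt : ∀ x : L, ω x x = 0)
    (hnd : ∀ x : L, (∀ y : L, ω x y = 0) → x = 0)
    (hclosed : ∀ x y z : L, ω ⁅x, y⁆ z + ω ⁅y, z⁆ x + ω ⁅z, x⁆ y = 0)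
    (j : LieIdeal ℝ L)
    (hlag : ∀ x : L, x ∈ j ↔ ∀ u ∈ j, ω x u = 0) :
    ∃ Dq : (L ⧸ j) →ₗ[ℝ] (L ⧸ j) →ₗ[ℝ] (L ⧸ j),
      (∀ x y z : L,
        LieSubmodule.Quotient.mk (N := j) z
            = Dq (LieSubmodule.Quotient.mk (N := j) x)
                  (LieSubmodule.Quotient.mk (N := j) y) →
          ∀ u ∈ j, ω z u = -(ω y ⁅x, u⁆)) ∧
      (∀ a b : L ⧸ j, Dq a b - Dq b a = ⁅a, b⁆) ∧
      (∀ a b c : L ⧸ j, Dq a (Dq b c) - Dq b (Dq a c) = Dq ⁅a, b⁆ c) := by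
  classical
  -- skew-symmetry
  have hskew : ∀ x y : L, ω x y = -ω y x := by
    intro x y
    have h := halt (x + y)
    simp only [map_add, LinearMap.add_apply, halt x, halt y] at h
    linarith
  have hjj : ∀ u ∈ j, ∀ v ∈ j, ω u v = 0 := fun u hu v hv => (hlag u).mp hu v hv
  -- j is abelian
  have habel : ∀ u ∈ j, ∀ v ∈ j, ⁅u, v⁆ = (0 : L) := by
    intro u hu v hv
    apply hnd
    intro y
    have h := hclosed u v y
    have hvy : ⁅v, y⁆ ∈ j := by
      have h0 : -⁅y, v⁆ ∈ j := neg_mem (j.lie_mem hv)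
      rw [lie_skew] at h0
      exact h0
    have hyu : ⁅y, u⁆ ∈ j := j.lie_mem hu
    have h1 : ω ⁅v, y⁆ u = 0 := by
      rw [hskew]; rw [hjj u hu _ hvy]; ring
    have h2 : ω ⁅y, u⁆ v = 0 := hjj _ hyu v hv
    have h3 : ω ⁅u, v⁆ y + ω ⁅v, y⁆ u + ω ⁅y, u⁆ v = 0 := hclosed u v y
    linarith
  -- ω is bijective onto the dual
  have hinj : Function.Injective ω := by
    intro a b hab
    have hz : ω (a - b) = 0 := by rw [map_sub, hab, sub_self]
    have : a - b = 0 := hnd _ (fun y => by rw [hz]; rfl)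
    exact sub_eq_zero.mp this
  have hsurj : Function.Surjective ω :=
    (LinearMap.injective_iff_surjective_of_finrank_eq_finrank
      (Subspace.dual_finrank_eq (V := L)).symm).mp hinj
  -- the pairing with j
  set Φ : L →ₗ[ℝ] Module.Dual ℝ j.toSubmodule :=
    (j.toSubmodule.subtype).dualMap.comp ω with hΦdef
  have hΦapp : ∀ (x : L) (u : j.toSubmodule), Φ x u = ω x u := fun _ _ => rfl
  have hΦker : ∀ x : L, Φ x = 0 ↔ x ∈ j := by
    intro x
    constructor
    · intro h
      refine (hlag x).mpr (fun u hu => ?_)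
      have := congrArg (fun f => f ⟨u, hu⟩) h
      simpa [hΦapp] using this
    · intro hx
      ext ⟨u, hu⟩
      simpa [hΦapp] using (hlag x).mp hx u hu
  have hΦsurj : Function.Surjective Φ := by
    intro f
    obtain ⟨g, hg⟩ := LinearMap.exists_extend f
    obtain ⟨x, hx⟩ := hsurj g
    refine ⟨x, ?_⟩
    ext u
    have : Φ x u = g (j.toSubmodule.subtype u) := by rw [hΦapp]; rw [hx]; rfl
    rw [this, ← hg]; rfl
  have hΦj : j.toSubmodule ≤ LinearMap.ker Φ := fun x hx => (hΦker x).mpr hx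
  -- the induced iso (L ⧸ j) ≃ j*
  set Φbar : (L ⧸ j) →ₗ[ℝ] Module.Dual ℝ j.toSubmodule :=
    Submodule.liftQ j.toSubmodule Φ hΦj with hΦbardef
  have hΦbarmk : ∀ x : L, Φbar (LieSubmodule.Quotient.mk (N := j) x) = Φ x := fun _ => rfl
  have hΦbarbij : Function.Bijective Φbar := by
    constructor
    · intro a b hab
      obtain ⟨x, rfl⟩ := Submodule.Quotient.mk_surjective j.toSubmodule a
      obtain ⟨y, rfl⟩ := Submodule.Quotient.mk_surjective j.toSubmodule b
      have : Φ (x - y) = 0 := by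
        rw [map_sub]
        rw [show Φ x = Φbar (Submodule.Quotient.mk x) from rfl,
            show Φ y = Φbar (Submodule.Quotient.mk y) from rfl, hab, sub_self]
      exact (Submodule.Quotient.eq _).mpr ((hΦker _).mp this)
    · intro f
      obtain ⟨x, hx⟩ := hΦsurj f
      exact ⟨Submodule.Quotient.mk x, hx⟩
  set Φe : (L ⧸ j) ≃ₗ[ℝ] Module.Dual ℝ j.toSubmodule :=
    LinearEquiv.ofBijective Φbar hΦbarbij with hΦedef
  have hΦemk : ∀ x : L, Φe (LieSubmodule.Quotient.mk (N := j) x) = Φ x := fun _ => rfl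
  -- the bilinear map B x y = (u ↦ -ω y ⁅x, u⁆)
  set B : L →ₗ[ℝ] L →ₗ[ℝ] Module.Dual ℝ j.toSubmodule :=
    LinearMap.mk₂ ℝ
      (fun x y => -((ω y).comp ((LieAlgebra.ad ℝ L x).comp j.toSubmodule.subtype)))
      (by intro x x' y; ext u; simp [LieAlgebra.ad_apply, add_lie]; ring)
      (by intro c x y; ext u; simp [LieAlgebra.ad_apply, smul_lie])
      (by intro x y y'; ext u; simp [LieAlgebra.ad_apply]; ring)
      (by intro c x y; ext u; simp [LieAlgebra.ad_apply]) with hBdef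
  have hBapp : ∀ (x y : L) (u : j.toSubmodule), B x y u = -(ω y ⁅x, (u : L)⁆) := by
    intro x y u; rfl
  -- descend B to the quotient through Φe.symm
  set C : L →ₗ[ℝ] L →ₗ[ℝ] (L ⧸ j) := B.compr₂ Φe.symm.toLinearMap with hCdef
  have hCapp : ∀ x y : L, C x y = Φe.symm (B x y) := fun _ _ => rfl
  have hCy0 : ∀ x : L, j.toSubmodule ≤ LinearMap.ker (C x) := by
    intro x y hy
    have hB0 : B x y = 0 := by
      ext ⟨u, hu⟩
      have : ω y ⁅x, u⁆ = 0 := (hlag y).mp hy _ (j.lie_mem hu)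
      simp [hBapp, this]
    rw [LinearMap.mem_ker, hCapp, hB0, map_zero]
  have hCx0 : ∀ x ∈ j, ∀ y : L, C x y = 0 := by
    intro x hx y
    have hB0 : B x y = 0 := by
      ext ⟨u, hu⟩
      simp [hBapp, habel x hx u hu]
    rw [hCapp, hB0, map_zero]
  set D1 : L → ((L ⧸ j) →ₗ[ℝ] (L ⧸ j)) :=
    fun x => Submodule.liftQ j.toSubmodule (C x) (hCy0 x) with hD1def
  have hD1mk : ∀ x y : L, D1 x (LieSubmodule.Quotient.mk (N := j) y) = C x y := fun _ _ => rfl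
  set D' : L →ₗ[ℝ] ((L ⧸ j) →ₗ[ℝ] (L ⧸ j)) :=
    { toFun := D1
      map_add' := by
        intro a b
        apply LinearMap.ext
        intro q
        obtain ⟨y, rfl⟩ := Submodule.Quotient.mk_surjective j.toSubmodule q
        show D1 (a + b) (LieSubmodule.Quotient.mk (N := j) y)
            = D1 a (LieSubmodule.Quotient.mk (N := j) y)
              + D1 b (LieSubmodule.Quotient.mk (N := j) y)
        simp [hD1mk, map_add]
      map_smul' := by
        intro c a
        apply LinearMap.ext
        intro q
        obtain ⟨y, rfl⟩ := Submodule.Quotient.mk_surjective j.toSubmodule q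
        show D1 (c • a) (LieSubmodule.Quotient.mk (N := j) y)
            = c • D1 a (LieSubmodule.Quotient.mk (N := j) y)
        simp [hD1mk, map_smul] } with hD'def
  have hD'j : j.toSubmodule ≤ LinearMap.ker D' := by
    intro x hx
    rw [LinearMap.mem_ker]
    apply LinearMap.ext
    intro q
    obtain ⟨y, rfl⟩ := Submodule.Quotient.mk_surjective j.toSubmodule q
    show D1 x (LieSubmodule.Quotient.mk (N := j) y) = 0
    simp [hD1mk, hCx0 x hx y]
  set Dq : (L ⧸ j) →ₗ[ℝ] (L ⧸ j) →ₗ[ℝ] (L ⧸ j) :=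
    Submodule.liftQ j.toSubmodule D' hD'j with hDqdef
  have hkey : ∀ x y : L,
      Φe (Dq (LieSubmodule.Quotient.mk (N := j) x) (LieSubmodule.Quotient.mk (N := j) y))
        = B x y := by
    intro x y
    have h1 : Dq (LieSubmodule.Quotient.mk (N := j) x) (LieSubmodule.Quotient.mk (N := j) y)
        = Φe.symm (B x y) := rfl
    rw [h1, LinearEquiv.apply_symm_apply]
  have hmkbr : ∀ x y : L,
      (⁅LieSubmodule.Quotient.mk (N := j) x, LieSubmodule.Quotient.mk (N := j) y⁆ : L ⧸ j)
        = LieSubmodule.Quotient.mk (N := j) ⁅x, y⁆ :=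
    fun x y => (LieSubmodule.Quotient.mk_bracket (I := j) x y).symm
  -- property 1
  have hprop1 : ∀ x y z : L,
      LieSubmodule.Quotient.mk (N := j) z
          = Dq (LieSubmodule.Quotient.mk (N := j) x) (LieSubmodule.Quotient.mk (N := j) y) →
        ∀ u ∈ j, ω z u = -(ω y ⁅x, u⁆) := by
    intro x y z h u hu
    have h2 : Φ z = B x y := by rw [← hΦemk, h, hkey]
    have h3 := congrArg (fun f => f ⟨u, hu⟩) h2
    simpa [hΦapp, hBapp] using h3
  clear hΦdef hΦbardef hΦedef hBdef hCdef hD1def hD'def hDqdef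
  clear_value Φ Φbar Φe B C D1 D' Dq
  refine ⟨Dq, hprop1, ?_, ?_⟩
  · -- torsion-free
    intro a b
    obtain ⟨x, rfl⟩ := Submodule.Quotient.mk_surjective j.toSubmodule a
    obtain ⟨y, rfl⟩ := Submodule.Quotient.mk_surjective j.toSubmodule b
    apply Φe.injective
    rw [map_sub, hkey, hkey, hmkbr, hΦemk]
    ext ⟨u, hu⟩
    have hc := hclosed x y u
    have e1 : ω ⁅y, u⁆ x = -(ω x ⁅y, u⁆) := hskew _ _
    have e2 : ω ⁅u, x⁆ y = ω y ⁅x, u⁆ := by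
      rw [hskew, ← lie_skew x u, map_neg]
    have goal1 : -(ω y ⁅x, u⁆) - -(ω x ⁅y, u⁆) = ω ⁅x, y⁆ u := by linarith
    simpa [hBapp, hΦapp, LinearMap.sub_apply] using goal1
  · -- flatness
    intro a b c
    obtain ⟨x, rfl⟩ := Submodule.Quotient.mk_surjective j.toSubmodule a
    obtain ⟨y, rfl⟩ := Submodule.Quotient.mk_surjective j.toSubmodule b
    obtain ⟨z, rfl⟩ := Submodule.Quotient.mk_surjective j.toSubmodule c
    obtain ⟨w, hw⟩ := Submodule.Quotient.mk_surjective j.toSubmodule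
      (Dq (LieSubmodule.Quotient.mk (N := j) y) (LieSubmodule.Quotient.mk (N := j) z))
    obtain ⟨w', hw'⟩ := Submodule.Quotient.mk_surjective j.toSubmodule
      (Dq (LieSubmodule.Quotient.mk (N := j) x) (LieSubmodule.Quotient.mk (N := j) z))
    have hwp : ∀ u ∈ j, ω w u = -(ω z ⁅y, u⁆) := hprop1 y z w hw
    have hwp' : ∀ u ∈ j, ω w' u = -(ω z ⁅x, u⁆) := hprop1 x z w' hw'
    rw [← hw, ← hw', hmkbr]
    apply Φe.injective
    rw [map_sub, hkey, hkey, hkey]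
    ext ⟨u, hu⟩
    have hxu : ⁅x, u⁆ ∈ j := j.lie_mem hu
    have hyu : ⁅y, u⁆ ∈ j := j.lie_mem hu
    have e1 : ω w ⁅x, u⁆ = -(ω z ⁅y, ⁅x, u⁆⁆) := hwp _ hxu
    have e2 : ω w' ⁅y, u⁆ = -(ω z ⁅x, ⁅y, u⁆⁆) := hwp' _ hyu
    have jac : ⁅x, ⁅y, u⁆⁆ = ⁅⁅x, y⁆, u⁆ + ⁅y, ⁅x, u⁆⁆ := leibniz_lie x y u
    have e3 : ω z ⁅x, ⁅y, u⁆⁆ = ω z ⁅⁅x, y⁆, u⁆ + ω z ⁅y, ⁅x, u⁆⁆ := by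
      rw [jac, map_add]
    have goal1 : -(ω w ⁅x, u⁆) - -(ω w' ⁅y, u⁆) = -(ω z ⁅⁅x, y⁆, u⁆) := by
      rw [e1, e2]; linarith
    simpa [hBapp, LinearMap.sub_apply] using goal1
end

section
/- With g_{∇,α} = h ⊕ h* the Lagrangian extension of a flat Lie algebra (h, ∇) by a 2-cocycle α ∈ Z²_ρ(h, h*), the non-degenerate alternating form ω₀ defined by ω₀(x,ξ) = ξ(x), ω₀(x,y)=0, ω₀(ξ,η)=0 (x,y ∈ h, ξ,η ∈ h*) is a symplectic form on g_{∇,α} (i.e., satisfies the closedness cocycle identity) if and only if α satisfies the Bianchi identity α(x,y)(z) + α(y,z)(x) + α(z,x)(y) = 0 for all x,y,z ∈ h. -/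
/-- On the Lagrangian extension `g_{∇,α} = h ⊕ h*`, the canonical pairing form
`ω₀((x,ξ),(y,η)) = η(x) - ξ(y)` is closed (i.e. symplectic) if and only if `α`
satisfies the Bianchi identity `α(x,y)(z) + α(y,z)(x) + α(z,x)(y) = 0`. -/
theorem canonical_form_symplectic_iff_bianchi
    (h : Type*) [LieRing h] [LieAlgebra ℝ h] [FiniteDimensional ℝ h]
    (D : h →ₗ[ℝ] h →ₗ[ℝ] h)
    (htf : ∀ x y : h, D x y - D y x = ⁅x, y⁆)
    (hflat : ∀ x y z : h, D x (D y z) - D y (D x z) = D ⁅x, y⁆ z)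
    (α : h →ₗ[ℝ] h →ₗ[ℝ] Module.Dual ℝ h)
    (haltα : ∀ x : h, α x x = 0)
    (hcocycle : ∀ x y z : h,
      -((α y z).comp (D x)) + (α x z).comp (D y) - (α x y).comp (D z)
        - α ⁅x, y⁆ z + α ⁅x, z⁆ y - α ⁅y, z⁆ x = 0)
    (B : (h × Module.Dual ℝ h) → (h × Module.Dual ℝ h) → (h × Module.Dual ℝ h))
    (hB : ∀ a b : h × Module.Dual ℝ h,
      B a b = (⁅a.1, b.1⁆, α a.1 b.1 - (b.2).comp (D a.1) + (a.2).comp (D b.1)))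
    (W : (h × Module.Dual ℝ h) → (h × Module.Dual ℝ h) → ℝ)
    (hW : ∀ a b : h × Module.Dual ℝ h, W a b = b.2 a.1 - a.2 b.1) :
    (∀ a b c : h × Module.Dual ℝ h, W (B a b) c + W (B b c) a + W (B c a) b = 0)
      ↔ (∀ x y z : h, α x y z + α y z x + α z x y = 0) := by
  constructor
  · intro H x y z
    have := H (x, 0) (y, 0) (z, 0)
    simp only [hW, hB] at this
    simp at this
    linarith
  · intro H a b c
    obtain ⟨x, ξ⟩ := a
    obtain ⟨y, η⟩ := b
    obtain ⟨z, ζ⟩ := c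
    simp only [hW, hB]
    simp only [LinearMap.sub_apply, LinearMap.add_apply, LinearMap.comp_apply]
    have h1 := congrArg ξ (htf y z)
    have h2 := congrArg η (htf z x)
    have h3 := congrArg ζ (htf x y)
    simp only [map_sub] at h1 h2 h3
    have h4 := H x y z
    linarith
end

section
/- The Chevalley–Eilenberg coboundary preserves the Lagrangian (symmetric/cyclic) conditions: if (h, ∇) is a flat Lie algebra with dual representation ρ, and μ : h → h* is a symmetric 1-cochain (μ(x)(y) = μ(y)(x) for all x,y), then ∂μ, defined by (∂μ)(x,y) = ρ(x)μ(y) - ρ(y)μ(x) - μ([x,y]), satisfies the cyclic Bianchi identity (∂μ)(x,y)(z) + (∂μ)(y,z)(x) + (∂μ)(z,x)(y) = 0 for all x,y,z ∈ h. -/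
/-- The Chevalley–Eilenberg coboundary of a symmetric 1-cochain satisfies the
cyclic Bianchi identity:
`(∂μ)(x,y)(z) + (∂μ)(y,z)(x) + (∂μ)(z,x)(y) = 0`, where
`(∂μ)(x,y) = ρ(x)μ(y) - ρ(y)μ(x) - μ([x,y])` and `ρ(x)ξ = -ξ∘∇_x`. -/
theorem coboundary_of_symmetric_cochain_is_lagrangian
    (h : Type*) [LieRing h] [LieAlgebra ℝ h] [FiniteDimensional ℝ h]
    (D : h →ₗ[ℝ] h →ₗ[ℝ] h)
    (htf : ∀ x y : h, D x y - D y x = ⁅x, y⁆)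
    (hflat : ∀ x y z : h, D x (D y z) - D y (D x z) = D ⁅x, y⁆ z)
    (μ : h →ₗ[ℝ] Module.Dual ℝ h)
    (hsym : ∀ x y : h, μ x y = μ y x) :
    ∀ x y z : h,
      (-(μ y (D x z)) + μ x (D y z) - μ ⁅x, y⁆ z)
        + (-(μ z (D y x)) + μ y (D z x) - μ ⁅y, z⁆ x)
        + (-(μ x (D z y)) + μ z (D x y) - μ ⁅z, x⁆ y) = 0 := by
  intro x y z
  rw [← htf x y, ← htf y z, ← htf z x]
  simp only [map_sub, LinearMap.sub_apply]
  rw [hsym (D x y) z, hsym (D y x) z, hsym (D y z) x, hsym (D z y) x,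
    hsym (D z x) y, hsym (D x z) y]
  ring
end

section
/- Let (g_{∇,α}, ω₀) be a Lagrangian extension of a flat Lie algebra (h, ∇) by α satisfying the Bianchi identity. The flat torsion-free connection * on g_{∇,α} determined by ω₀((a)*(b), c) = -ω₀(b, [a,c]) is given explicitly by: x*y = ∇_x y + α(x,·)(y) (here α(x,·)(y) ∈ h* is the functional z ↦ α(x,z)(y)), ξ₁*ξ₂ = 0, ξ*x = ξ∘(∇_x - ad_x), and x*ξ = -ξ∘ad_x, for all x,y ∈ h and ξ,ξ₁,ξ₂ ∈ h*. -/
/-- On the Lagrangian extension `(g_{∇,α}, ω₀)` of a flat Lie algebra, the flat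
torsion-free connection `*` determined by `ω₀(a*b, c) = -ω₀(b, [a,c])` is given
by the explicit formulas `x*y = ∇_x y + α(x,·)(y)`, `ξ₁*ξ₂ = 0`,
`ξ*x = ξ∘(∇_x - ad_x)` and `x*ξ = -ξ∘ad_x`. -/
theorem induced_connection_explicit_formulas
    (h : Type*) [LieRing h] [LieAlgebra ℝ h] [FiniteDimensional ℝ h]
    (D : h →ₗ[ℝ] h →ₗ[ℝ] h)
    (htf : ∀ x y : h, D x y - D y x = ⁅x, y⁆)
    (hflat : ∀ x y z : h, D x (D y z) - D y (D x z) = D ⁅x, y⁆ z)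
    (α : h →ₗ[ℝ] h →ₗ[ℝ] Module.Dual ℝ h)
    (haltα : ∀ x : h, α x x = 0)
    (hcocycle : ∀ x y z : h,
      -((α y z).comp (D x)) + (α x z).comp (D y) - (α x y).comp (D z)
        - α ⁅x, y⁆ z + α ⁅x, z⁆ y - α ⁅y, z⁆ x = 0)
    (hbianchi : ∀ x y z : h, α x y z + α y z x + α z x y = 0)
    (B : (h × Module.Dual ℝ h) → (h × Module.Dual ℝ h) → (h × Module.Dual ℝ h))
    (hB : ∀ a b : h × Module.Dual ℝ h,
      B a b = (⁅a.1, b.1⁆, α a.1 b.1 - (b.2).comp (D a.1) + (a.2).comp (D b.1)))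
    (W : (h × Module.Dual ℝ h) → (h × Module.Dual ℝ h) → ℝ)
    (hW : ∀ a b : h × Module.Dual ℝ h, W a b = b.2 a.1 - a.2 b.1)
    (star : (h × Module.Dual ℝ h) → (h × Module.Dual ℝ h) → (h × Module.Dual ℝ h))
    (hstar : ∀ a b c : h × Module.Dual ℝ h, W (star a b) c = -(W b (B a c))) :
    (∀ x y : h, star (x, 0) (y, 0) = (D x y, (α x).flip y)) ∧
    (∀ ξ₁ ξ₂ : Module.Dual ℝ h, star (0, ξ₁) (0, ξ₂) = 0) ∧
    (∀ (ξ : Module.Dual ℝ h) (x : h),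
      star (0, ξ) (x, 0) = (0, ξ.comp (D x - LieAlgebra.ad ℝ h x))) ∧
    (∀ (x : h) (ξ : Module.Dual ℝ h),
      star (x, 0) (0, ξ) = (0, -(ξ.comp (LieAlgebra.ad ℝ h x)))) := by
  -- nondegeneracy of W
  have sep : ∀ u v : h × Module.Dual ℝ h, (∀ c, W u c = W v c) → u = v := by
    intro u v huv
    have h2 : u.2 = v.2 := by
      ext z
      have := huv (z, 0)
      rw [hW, hW] at this
      simpa using this
    have h1 : u.1 = v.1 := by
      rw [← sub_eq_zero, ← Module.forall_dual_apply_eq_zero_iff ℝ (u.1 - v.1)]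
      intro φ
      have := huv (0, φ)
      rw [hW, hW] at this
      simp only [map_sub, sub_eq_zero]
      simpa using this
    exact Prod.ext h1 h2
  have key : ∀ a b u : h × Module.Dual ℝ h,
      (∀ c, W u c = -(W b (B a c))) → star a b = u := by
    intro a b u hu
    exact sep _ _ fun c => (hstar a b c).trans (hu c).symm
  refine ⟨?_, ?_, ?_, ?_⟩
  · intro x y
    apply key
    intro c
    rw [hW, hW, hB]
    simp [sub_eq_iff_eq_add]
  · intro ξ₁ ξ₂
    apply key
    intro c
    rw [hW, hW, hB]
    simp
  · intro ξ x
    apply key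
    intro c
    rw [hW, hW, hB]
    have : D x c.1 - D c.1 x = ⁅x, c.1⁆ := htf x c.1
    simp only [LinearMap.comp_apply, LinearMap.sub_apply, map_sub, LieAlgebra.ad_apply]
    simp only [map_zero, LinearMap.zero_apply, LinearMap.map_zero]
    simp
    rw [show ⁅x, c.1⁆ = D x c.1 - D c.1 x from (htf x c.1).symm]
    simp
  · intro x ξ
    apply key
    intro c
    rw [hW, hW, hB]
    simp [LieAlgebra.ad_apply]
end

section
/- On the 3-dimensional abelian real Lie algebra h = ℝ³ with basis e₁,e₂,e₃, the bilinear product defined by ∇_{e₃}e_j = e_j for j=1,2,3, ∇_{e₁}e₃ = e₁, ∇_{e₂}e₃ = e₂, and all other products of basis vectors zero, is a flat torsion-free connection (i.e., ∇_x y = ∇_y x since the bracket is zero, and ∇_x∇_y = ∇_y∇_x) admitting e₃ as a right-identity element (∇_x e₃ = x for all x). -/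
/-- On the abelian Lie algebra `ℝ³` (trivial bracket), the bilinear product
with `∇_{e₃}e_j = e_j` (j = 1,2,3), `∇_{e₁}e₃ = e₁`, `∇_{e₂}e₃ = e₂`, and all
other basis products zero, is a flat torsion-free connection (commutative with
commuting left multiplications, since the bracket vanishes) admitting `e₃` as a
right-identity element. -/
theorem flat_connection_on_abelian_R3
    (D : (Fin 3 → ℝ) →ₗ[ℝ] (Fin 3 → ℝ) →ₗ[ℝ] (Fin 3 → ℝ))
    (e : Fin 3 → Fin 3 → ℝ)
    (he : ∀ i : Fin 3, e i = Pi.single i 1)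
    (h11 : D (e 0) (e 0) = 0) (h12 : D (e 0) (e 1) = 0) (h13 : D (e 0) (e 2) = e 0)
    (h21 : D (e 1) (e 0) = 0) (h22 : D (e 1) (e 1) = 0) (h23 : D (e 1) (e 2) = e 1)
    (h31 : D (e 2) (e 0) = e 0) (h32 : D (e 2) (e 1) = e 1) (h33 : D (e 2) (e 2) = e 2) :
    (∀ x y : Fin 3 → ℝ, D x y = D y x) ∧
    (∀ x y z : Fin 3 → ℝ, D x (D y z) = D y (D x z)) ∧
    (∀ x : Fin 3 → ℝ, D x (e 2) = x) := by
  have hx : ∀ x : Fin 3 → ℝ, x = x 0 • e 0 + x 1 • e 1 + x 2 • e 2 := by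
    intro x
    funext j
    simp only [he, Pi.add_apply, Pi.smul_apply, smul_eq_mul]
    fin_cases j <;> simp
  have key : ∀ x y : Fin 3 → ℝ,
      D x y = (x 0 * y 2) • e 0 + (x 1 * y 2) • e 1 +
        (x 2 * y 0) • e 0 + (x 2 * y 1) • e 1 + (x 2 * y 2) • e 2 := by
    intro x y
    conv_lhs => rw [hx x, hx y]
    simp only [map_add, map_smul, LinearMap.add_apply, LinearMap.smul_apply,
      h11, h12, h13, h21, h22, h23, h31, h32, h33, smul_zero, smul_smul]
    module
  refine ⟨?_, ?_, ?_⟩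
  · intro x y
    rw [key, key]
    module
  · intro x y z
    rw [key y z, key x z]
    simp only [map_add, map_smul]
    rw [key x (e 0), key x (e 1), key x (e 2), key y (e 0), key y (e 1), key y (e 2)]
    have E : ∀ i j : Fin 3, e i j = if i = j then 1 else 0 := by
      intro i j
      simp [he, Pi.single_apply, eq_comm]
    simp only [E, show ((0:Fin 3) = 2) = False by simp, show ((1:Fin 3) = 2) = False by simp,
      show ((2:Fin 3) = 0) = False by simp, show ((2:Fin 3) = 1) = False by simp,
      if_false, zero_add, add_zero, show ((0:Fin 3) = 1) = False by simp,
      show ((1:Fin 3) = 0) = False by simp, if_true]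
    module
  · intro x
    have h2 : (e 2 : Fin 3 → ℝ) 0 = 0 ∧ (e 2 : Fin 3 → ℝ) 1 = 0 ∧ (e 2 : Fin 3 → ℝ) 2 = 1 := by
      simp [he, Pi.single_apply]
    rw [key, h2.1, h2.2.1, h2.2.2]
    conv_rhs => rw [hx x]
    module
end

section
/- The Lagrangian extension (g_{∇,α}, ω₀) of a flat Lie algebra (h, ∇) is a symplectic Novikov Lie algebra (i.e., the induced connection * satisfies (a*b)*c = (a*c)*b for all a,b,c) if and only if: (1) the flat algebra (h, ∇·) is Novikov and associative (the right multiplications ϱ(x) = ∇_x - ad_x pairwise commute and the associator of ∇ vanishes), and (2) α(∇_z y, ·)(x) + α(z,·)(y)∘ϱ(x) = α(∇_z x, ·)(y) + α(z,·)(x)∘ϱ(y) for all x,y,z ∈ h. -/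
/-- The Lagrangian extension `(g_{∇,α}, ω₀)` is a symplectic Novikov Lie
algebra — i.e. the induced connection `*` satisfies `(a*b)*c = (a*c)*b` — if
and only if: (1) the right multiplications `ϱ(x) = ∇_x - ad_x` pairwise commute
and `∇` is associative, and (2) the cocycle `α` satisfies
`α(∇_z y,·)(x) + α(z,·)(y)∘ϱ(x) = α(∇_z x,·)(y) + α(z,·)(x)∘ϱ(y)`. -/
theorem lagrangian_extension_snla_iff
    (h : Type*) [LieRing h] [LieAlgebra ℝ h] [FiniteDimensional ℝ h]
    (D : h →ₗ[ℝ] h →ₗ[ℝ] h)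
    (htf : ∀ x y : h, D x y - D y x = ⁅x, y⁆)
    (hflat : ∀ x y z : h, D x (D y z) - D y (D x z) = D ⁅x, y⁆ z)
    (α : h →ₗ[ℝ] h →ₗ[ℝ] Module.Dual ℝ h)
    (haltα : ∀ x : h, α x x = 0)
    (hcocycle : ∀ x y z : h,
      -((α y z).comp (D x)) + (α x z).comp (D y) - (α x y).comp (D z)
        - α ⁅x, y⁆ z + α ⁅x, z⁆ y - α ⁅y, z⁆ x = 0)
    (hbianchi : ∀ x y z : h, α x y z + α y z x + α z x y = 0)
    (star : (h × Module.Dual ℝ h) → (h × Module.Dual ℝ h) → (h × Module.Dual ℝ h))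
    (hstar : ∀ a b : h × Module.Dual ℝ h,
      star a b = (D a.1 b.1,
        (α a.1).flip b.1 + (a.2).comp (D b.1 - LieAlgebra.ad ℝ h b.1)
          - (b.2).comp (LieAlgebra.ad ℝ h a.1))) :
    (∀ a b c : h × Module.Dual ℝ h, star (star a b) c = star (star a c) b)
      ↔ ((∀ x y : h,
            (D x - LieAlgebra.ad ℝ h x).comp (D y - LieAlgebra.ad ℝ h y)
              = (D y - LieAlgebra.ad ℝ h y).comp (D x - LieAlgebra.ad ℝ h x)) ∧
         (∀ x y z : h, D (D x y) z = D x (D y z)) ∧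
         (∀ x y z : h,
            (α (D z y)).flip x + ((α z).flip y).comp (D x - LieAlgebra.ad ℝ h x)
              = (α (D z x)).flip y
                + ((α z).flip x).comp (D y - LieAlgebra.ad ℝ h y))) := by

  have hϱ : ∀ x w : h, (D x - LieAlgebra.ad ℝ h x) w = D w x := by
    intro x w
    have h1 := htf x w
    simp only [LinearMap.sub_apply, LieAlgebra.ad_apply, ← h1]
    abel
  have hLS : ∀ x y z : h, D x (D y z) - D y (D x z)
      = D (D x y) z - D (D y x) z := by
    intro x y z
    have h1 := hflat x y z
    rw [← htf x y] at h1
    simpa [map_sub] using h1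
  have hsep : ∀ v w : h, (∀ φ : Module.Dual ℝ h, φ v = φ w) → v = w := by
    intro v w hφ
    have h0 : ∀ φ : Module.Dual ℝ h, φ (v - w) = 0 := by
      intro φ; simp [hφ φ]
    exact sub_eq_zero.mp ((Module.forall_dual_apply_eq_zero_iff ℝ (v - w)).1 h0)
  constructor
  · intro H
    have hC1 : ∀ x y : h,
        (D x - LieAlgebra.ad ℝ h x).comp (D y - LieAlgebra.ad ℝ h y)
          = (D y - LieAlgebra.ad ℝ h y).comp (D x - LieAlgebra.ad ℝ h x) := by
      intro x y
      ext w
      refine hsep _ _ fun φ => ?_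
      have hh := H (0, φ) (x, 0) (y, 0)
      rw [hstar, hstar, hstar, hstar] at hh
      have h2 := congrArg Prod.snd hh
      simp only [map_zero, LinearMap.zero_apply, LinearMap.flip_apply,
        LinearMap.zero_comp, LinearMap.comp_zero, add_zero, zero_add,
        sub_zero, zero_sub, neg_zero] at h2
      have h3 := DFunLike.congr_fun h2 w
      simpa using h3
    have hN : ∀ x y a : h, D (D a y) x = D (D a x) y := by
      intro x y a
      have h2 := DFunLike.congr_fun (hC1 x y) a
      simpa [hϱ] using h2
    have hE : ∀ x z w : h, ⁅x, D w z⁆ = ⁅D x z, w⁆ := by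
      intro x z w
      refine hsep _ _ fun φ => ?_
      have hh := H (x, 0) (0, φ) (z, 0)
      rw [hstar, hstar, hstar, hstar] at hh
      have h2 := congrArg Prod.snd hh
      simp only [map_zero, LinearMap.zero_apply, LinearMap.flip_apply,
        LinearMap.zero_comp, LinearMap.comp_zero, add_zero, zero_add,
        sub_zero, zero_sub, neg_zero, sub_self] at h2
      have h3 := DFunLike.congr_fun h2 w
      simp [hϱ] at h3
      have h4 : φ ⁅x, D w z⁆ = φ ⁅x, D z w⁆ - φ ⁅x, ⁅z, w⁆⁆ := by
        rw [← map_sub, ← lie_sub]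
        congr 2
        rw [← htf z w]; abel
      linarith [h3, h4]
    refine ⟨hC1, ?_, ?_⟩
    · intro x y z
      -- from hE: D x (D y z) - D (D y z) x = D (D x z) y - D y (D x z)
      have e1 : D x (D y z) - D (D y z) x = D (D x z) y - D y (D x z) := by
        have := hE x z y
        rw [← htf x (D y z), ← htf (D x z) y] at this
        exact this
      have e2 := hLS x y z
      -- substitutions via hN
      have n1 : D (D y z) x = D (D y x) z := hN x z y
      have n2 : D (D x z) y = D (D x y) z := hN y z x
      rw [n1, n2] at e1
      -- e1 : D x (D y z) - D (D y x) z = D (D x y) z - D y (D x z)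
      -- e2 : D x (D y z) - D y (D x z) = D (D x y) z - D (D y x) z
      have e3 : (2 : ℝ) • D x (D y z) = (2 : ℝ) • D (D x y) z := by
        linear_combination (norm := module) e1 + e2
      exact (smul_right_injective h (two_ne_zero) e3).symm
    · intro x y z
      have hh := H (z, 0) (y, 0) (x, 0)
      rw [hstar, hstar, hstar, hstar] at hh
      have h2 := congrArg Prod.snd hh
      simp only [map_zero, LinearMap.zero_apply, LinearMap.flip_apply,
        LinearMap.zero_comp, LinearMap.comp_zero, add_zero, zero_add,
        sub_zero, zero_sub, neg_zero] at h2
      exact h2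
  · rintro ⟨C1, C2, C3⟩ a b c
    obtain ⟨x, ξ⟩ := a
    obtain ⟨y, η⟩ := b
    obtain ⟨z, ζ⟩ := c
    have hN : ∀ x y a : h, D (D a y) x = D (D a x) y := by
      intro x y a
      have h2 := DFunLike.congr_fun (C1 x y) a
      simpa [hϱ] using h2
    have hE : ∀ x z w : h, ⁅x, D w z⁆ = ⁅D x z, w⁆ := by
      intro x z w
      rw [← htf x (D w z), ← htf (D x z) w]
      rw [← C2 x w z, hN x z w, ← C2 w x z, hN w z x]
    rw [hstar, hstar, hstar, hstar]
    simp only [Prod.mk.injEq]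
    constructor
    · exact hN z y x
    · ext w
      simp only [LinearMap.add_apply, LinearMap.sub_apply, LinearMap.comp_apply,
        LinearMap.flip_apply, LieAlgebra.ad_apply, hϱ]
      have hA := DFunLike.congr_fun (C3 z y x) w
      simp only [LinearMap.add_apply, LinearMap.comp_apply, LinearMap.flip_apply,
        hϱ] at hA
      have hXi : ξ (D (D w z) y) = ξ (D (D w y) z) := congrArg ξ (hN y z w)
      have hEta : η ⁅x, D w z⁆ = η ⁅D x z, w⁆ := congrArg η (hE x z w)
      have hZeta : ζ ⁅D x y, w⁆ = ζ ⁅x, D w y⁆ := congrArg ζ (hE x y w).symm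
      linarith [hA, hXi, hEta, hZeta]
end
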